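/- Let σ_1, …, σ_k be a normalized rank-1 POVM on ℂ^d. Then for every density matrix ρ, ln(k/d) ≤ Σ_{j=1}^k η((d/k)·Re tr(σ_j ρ)) ≤ ln k. -/

import Mathlib

open scoped ComplexOrder
open Matrix

private lemma psd_trace_re_nonneg {n : Type*} [Fintype n] [DecidableEq n]
    {C : Matrix n n ℂ} (hC : C.PosSemidef) : 0 ≤ C.trace.re := by
  have h : ∀ i, 0 ≤ (C i i).re := by
    intro i
    have h2 := hC.dotProduct_mulVec_nonneg (Pi.single i 1)
    have : star (Pi.single i 1 : n → ℂ) ⬝ᵥ C *ᵥ Pi.single i 1 = C i i := by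
      simp [dotProduct, Matrix.mulVec, Pi.single_apply, Finset.sum_ite_eq,
        Finset.sum_ite_eq']
    rw [this] at h2
    simpa using (Complex.le_def.mp h2).1
  rw [Matrix.trace, Complex.re_sum]
  exact Finset.sum_nonneg fun i _ => h i

open scoped MatrixOrder in
private lemma psd_trace_mul_re_nonneg {n : Type*} [Fintype n] [DecidableEq n]
    {A B : Matrix n n ℂ} (hA : A.PosSemidef) (hB : B.PosSemidef) :
    0 ≤ ((A * B).trace).re := by
  have hAe : CFC.sqrt A * CFC.sqrt A = A := by rw [← pow_two]; exact CFC.sq_sqrt A hA.nonneg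
  have hBe : CFC.sqrt B * CFC.sqrt B = B := by rw [← pow_two]; exact CFC.sq_sqrt B hB.nonneg
  have key : ((CFC.sqrt A * CFC.sqrt A) * (CFC.sqrt B * CFC.sqrt B)).trace
      = ((CFC.sqrt B * CFC.sqrt A)ᴴ * (CFC.sqrt B * CFC.sqrt A)).trace := by
    rw [Matrix.conjTranspose_mul, (CFC.sqrt_nonneg A).posSemidef.1, (CFC.sqrt_nonneg B).posSemidef.1]
    rw [show CFC.sqrt A * CFC.sqrt A * (CFC.sqrt B * CFC.sqrt B)
        = CFC.sqrt A * (CFC.sqrt A * CFC.sqrt B * CFC.sqrt B) by noncomm_ring,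
      Matrix.trace_mul_comm]
    noncomm_ring
  rw [hAe, hBe] at key
  rw [key]
  exact psd_trace_re_nonneg (Matrix.posSemidef_conjTranspose_mul_self _)

/-- For a normalized rank-1 POVM `(d/k)·σ_j` on `ℂ^d` and any density matrix `ρ`,
the entropy of measurement satisfies `ln(k/d) ≤ H(ρ) ≤ ln k`. -/
theorem stmt_5 {d k : ℕ} (hd : 0 < d) (hk : 0 < k)
    (σ : Fin k → Matrix (Fin d) (Fin d) ℂ)
    (hherm : ∀ j, (σ j).IsHermitian)
    (hproj : ∀ j, σ j * σ j = σ j)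
    (htr : ∀ j, (σ j).trace = 1)
    (hsum : ∑ j, σ j = ((k : ℂ) / (d : ℂ)) • 1)
    (ρ : Matrix (Fin d) (Fin d) ℂ)
    (hρ : ρ.PosSemidef) (hρtr : ρ.trace = 1) :
    Real.log ((k : ℝ) / d) ≤
      ∑ j, Real.negMulLog (((d : ℝ) / k) * ((σ j * ρ).trace).re) ∧
    ∑ j, Real.negMulLog (((d : ℝ) / k) * ((σ j * ρ).trace).re) ≤ Real.log (k : ℝ) := by
  have hdR : (0:ℝ) < d := by exact_mod_cast hd
  have hkR : (0:ℝ) < k := by exact_mod_cast hk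
  set c : ℝ := (d : ℝ) / k with hc
  have hcpos : 0 < c := div_pos hdR hkR
  set p : Fin k → ℝ := fun j => c * ((σ j * ρ).trace).re with hp
  -- each σ j is PSD
  have hσpsd : ∀ j, (σ j).PosSemidef := by
    intro j
    have : σ j = (σ j)ᴴ * σ j := by rw [(hherm j).eq]; exact (hproj j).symm
    rw [this]
    exact Matrix.posSemidef_conjTranspose_mul_self _
  have hp0 : ∀ j, 0 ≤ p j :=
    fun j => mul_nonneg hcpos.le (psd_trace_mul_re_nonneg (hσpsd j) hρ)
  -- tr(σ j ρ).re ≤ 1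
  have htr1 : ∀ j, ((σ j * ρ).trace).re ≤ 1 := by
    intro j
    have hcompl : (1 - σ j).PosSemidef := by
      have h1 : (1 - σ j) = (1 - σ j)ᴴ * (1 - σ j) := by
        have : (1 - σ j)ᴴ = 1 - σ j := by
          rw [Matrix.conjTranspose_sub, Matrix.conjTranspose_one, (hherm j).eq]
        rw [this, mul_sub, sub_mul, sub_mul, hproj j]
        noncomm_ring
      rw [h1]
      exact Matrix.posSemidef_conjTranspose_mul_self _
    have h2 := psd_trace_mul_re_nonneg hcompl hρ
    have h3 : ((1 - σ j) * ρ).trace = ρ.trace - (σ j * ρ).trace := by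
      rw [sub_mul, one_mul, Matrix.trace_sub]
    rw [h3, hρtr] at h2
    simpa using h2
  have hple : ∀ j, p j ≤ c := by
    intro j
    calc p j ≤ c * 1 := mul_le_mul_of_nonneg_left (htr1 j) hcpos.le
    _ = c := mul_one c
  -- the p j sum to 1
  have hpsum : ∑ j, p j = 1 := by
    have hsum2 : ∑ j, ((σ j * ρ).trace) = ((k : ℂ) / d) * ρ.trace := by
      rw [← Matrix.trace_sum, ← Finset.sum_mul, hsum, Matrix.smul_mul, one_mul,
        Matrix.trace_smul, smul_eq_mul]
    have hre : ∑ j, ((σ j * ρ).trace).re = (k : ℝ) / d := by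
      rw [← Complex.re_sum, hsum2, hρtr, mul_one]
      have : ((k : ℂ) / d) = (((k : ℝ) / d : ℝ) : ℂ) := by push_cast; ring
      rw [this, Complex.ofReal_re]
    simp only [hp]
    rw [← Finset.mul_sum, hre, hc]
    field_simp
  constructor
  · -- lower bound
    have key : ∀ j, p j * Real.log ((k:ℝ)/d) ≤ Real.negMulLog (p j) := by
      intro j
      rcases eq_or_lt_of_le (hp0 j) with h0 | h0
      · rw [← h0]; simp
      · rw [Real.negMulLog, neg_mul, ← mul_neg, ← Real.log_inv]
        apply mul_le_mul_of_nonneg_left _ (hp0 j)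
        apply Real.log_le_log (div_pos hkR hdR)
        rw [le_inv_comm₀ (div_pos hkR hdR) h0, inv_div]
        exact hple j
    calc Real.log ((k:ℝ)/d) = ∑ j, p j * Real.log ((k:ℝ)/d) := by
          rw [← Finset.sum_mul, hpsum, one_mul]
    _ ≤ ∑ j, Real.negMulLog (p j) := Finset.sum_le_sum fun j _ => key j
  · -- upper bound via Jensen
    have jensen := Real.concaveOn_negMulLog.le_map_sum
      (t := Finset.univ) (w := fun _ : Fin k => (k : ℝ)⁻¹) (p := p)
      (fun i _ => by positivity)
      (by simp [Finset.card_univ]; field_simp)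
      (fun i _ => hp0 i)
    have hsum3 : ∑ i, (k:ℝ)⁻¹ • p i = (k:ℝ)⁻¹ := by
      simp_rw [smul_eq_mul, ← Finset.mul_sum, hpsum, mul_one]
    rw [hsum3] at jensen
    have h4 : Real.negMulLog ((k:ℝ)⁻¹) = (k:ℝ)⁻¹ * Real.log k := by
      rw [Real.negMulLog, Real.log_inv]; ring
    rw [h4] at jensen
    have := mul_le_mul_of_nonneg_left jensen hkR.le
    rw [Finset.mul_sum] at this
    simp_rw [smul_eq_mul, ← mul_assoc, mul_inv_cancel₀ hkR.ne', one_mul] at this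
    exact this
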